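/- Let β, γ, δ, c, M > 0 and define m(t,ρ) = (M^{1/β} - c (c₀-ρ)^γ / (T-t)^δ)^β. If β = (α-1)/α, γ = α/(α-1), δ = 1/(α-1), then m_t + m m_ρ^α = (M^{1/β} - c (c₀-ρ)^γ (T-t)^{-δ})^{β-1} · (c₀-ρ)^γ (T-t)^{-(δ+1)} · (-cδβ + (cγβ)^α) on the region where the base is positive, 0 ≤ t < T and ρ < c₀. In particular m solves m_t + m m_ρ^α = 0 if and only if -c/α + c^α = 0, i.e., c = α^{1/(1-α)}... (equivalently c^{α-1} = 1/α). -/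

import Mathlib

open Real Set

theorem separated_variables_ansatz_identity (α M c₀ T c : ℝ) (hα : 1 < α)
    (hM : 0 < M) (hc₀ : 0 < c₀) (hT : 0 < T) (hc : 0 < c)
    (β γ δ : ℝ) (hβ : β = (α - 1) / α) (hγ : γ = α / (α - 1)) (hδ : δ = 1 / (α - 1))
    (m : ℝ → ℝ → ℝ)
    (hm : ∀ t ρ : ℝ, m t ρ = (M ^ (1 / β) - c * (c₀ - ρ) ^ γ * (T - t) ^ (-δ)) ^ β) :
    (∀ t ρ : ℝ, 0 ≤ t → t < T → ρ < c₀ →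
      0 < M ^ (1 / β) - c * (c₀ - ρ) ^ γ * (T - t) ^ (-δ) →
      ∃ mt mρ : ℝ,
        HasDerivAt (fun s => m s ρ) mt t ∧
        HasDerivAt (fun r => m t r) mρ ρ ∧
        mt + m t ρ * mρ ^ α =
          (M ^ (1 / β) - c * (c₀ - ρ) ^ γ * (T - t) ^ (-δ)) ^ (β - 1) *
            ((c₀ - ρ) ^ γ * (T - t) ^ (-(δ + 1))) *
            (-(c * δ * β) + (c * γ * β) ^ α)) ∧
    ((-(c / α) + c ^ α = 0) ↔ c ^ (α - 1) = 1 / α) := by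
  have hα0 : (0:ℝ) < α := lt_trans one_pos hα
  have hα1 : (0:ℝ) < α - 1 := by linarith
  have hβ0 : 0 < β := by rw [hβ]; positivity
  have hγ0 : 0 < γ := by rw [hγ]; positivity
  have hδ0 : 0 < δ := by rw [hδ]; positivity
  have hαne : α ≠ 0 := ne_of_gt hα0
  have hα1ne : α - 1 ≠ 0 := ne_of_gt hα1
  have hE1 : (γ - 1) * α = γ := by rw [hγ]; field_simp; ring
  have hE2 : (-δ) * α = -(δ + 1) := by rw [hδ]; field_simp; ring
  have hE3 : β + (β - 1) * α = β - 1 := by rw [hβ]; field_simp; ring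
  constructor
  · intro t ρ ht htT hρ hB
    have hP : (0:ℝ) < c₀ - ρ := sub_pos.mpr hρ
    have hQ : (0:ℝ) < T - t := sub_pos.mpr htT
    have hPle := hP.le
    have hQle := hQ.le
    have hBle := hB.le
    -- t derivative
    have d1 : HasDerivAt (fun s : ℝ => T - s) (-1) t := (hasDerivAt_id t).const_sub T
    have d2 : HasDerivAt (fun s : ℝ => (T - s) ^ (-δ))
        ((-1) * (-δ) * (T - t) ^ (-δ - 1)) t := d1.rpow_const (Or.inl hQ.ne')
    have d3 := (d2.const_mul (c * (c₀ - ρ) ^ γ)).const_sub (M ^ (1 / β))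
    have d4 := d3.rpow_const (p := β) (Or.inl hB.ne')
    -- ρ derivative
    have e1 : HasDerivAt (fun r : ℝ => c₀ - r) (-1) ρ := (hasDerivAt_id ρ).const_sub c₀
    have e2 : HasDerivAt (fun r : ℝ => (c₀ - r) ^ γ)
        ((-1) * γ * (c₀ - ρ) ^ (γ - 1)) ρ := e1.rpow_const (Or.inl hP.ne')
    have e3 := ((e2.const_mul c).mul_const ((T - t) ^ (-δ))).const_sub (M ^ (1 / β))
    have e4 := e3.rpow_const (p := β) (Or.inl hB.ne')
    have hfun1 : (fun s => m s ρ)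
        = fun s : ℝ => (M ^ (1 / β) - c * (c₀ - ρ) ^ γ * (T - s) ^ (-δ)) ^ β :=
      funext fun s => hm s ρ
    have hfun2 : (fun r => m t r)
        = fun r : ℝ => (M ^ (1 / β) - c * (c₀ - r) ^ γ * (T - t) ^ (-δ)) ^ β :=
      funext fun r => hm t r
    refine ⟨-(c * (c₀ - ρ) ^ γ * ((-1) * (-δ) * (T - t) ^ (-δ - 1))) * β *
        (M ^ (1 / β) - c * (c₀ - ρ) ^ γ * (T - t) ^ (-δ)) ^ (β - 1),
      -(c * ((-1) * γ * (c₀ - ρ) ^ (γ - 1)) * (T - t) ^ (-δ)) * β *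
        (M ^ (1 / β) - c * (c₀ - ρ) ^ γ * (T - t) ^ (-δ)) ^ (β - 1), ?_, ?_, ?_⟩
    · rw [hfun1]; exact d4
    · rw [hfun2]; exact e4
    · rw [hm t ρ]
      set P : ℝ := c₀ - ρ with hPdef
      set Q : ℝ := T - t with hQdef
      set B : ℝ := M ^ (1 / β) - c * P ^ γ * Q ^ (-δ) with hBdef
      have hcgb : (0:ℝ) ≤ c * γ * β := by positivity
      have hpow : (-(c * ((-1) * γ * P ^ (γ - 1)) * Q ^ (-δ)) * β * B ^ (β - 1)) ^ α
          = (c * γ * β) ^ α * (P ^ γ * (Q ^ (-(δ + 1)) * B ^ ((β - 1) * α))) := by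
        rw [show -(c * ((-1) * γ * P ^ (γ - 1)) * Q ^ (-δ)) * β * B ^ (β - 1)
            = (c * γ * β) * (P ^ (γ - 1) * (Q ^ (-δ) * B ^ (β - 1))) from by ring]
        rw [Real.mul_rpow hcgb (by positivity),
          Real.mul_rpow (x := P ^ (γ - 1)) (by positivity) (by positivity),
          Real.mul_rpow (x := Q ^ (-δ)) (by positivity) (by positivity),
          ← Real.rpow_mul hPle, ← Real.rpow_mul hQle, ← Real.rpow_mul hBle, hE1, hE2]
      have hBB : B ^ β * B ^ ((β - 1) * α) = B ^ (β - 1) := by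
        rw [← Real.rpow_add hB, hE3]
      rw [hpow, show (-δ - 1 : ℝ) = -(δ + 1) from by ring]
      linear_combination ((c * γ * β) ^ α * P ^ γ * Q ^ (-(δ + 1))) * hBB
  · have hca : c ^ α = c * c ^ (α - 1) := by
      have h := Real.rpow_add hc 1 (α - 1)
      rw [show (1:ℝ) + (α - 1) = α from by ring, Real.rpow_one] at h
      exact h
    rw [hca]
    constructor
    · intro h
      have h2 : c * c ^ (α - 1) = c * (1 / α) := by
        field_simp at h ⊢
        nlinarith [h]
      exact mul_left_cancel₀ hc.ne' h2
    · intro h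
      rw [h]
      field_simp; ring
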